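/- arXiv:1106.0016 — 3 statements merged into one kernel-verified Lean document; each statement's English description precedes it below -/
import Mathlib

section
/- The Jacobian of h(u) = u / sqrt(1 + u^T u) is φ(u) = (1 + u^T u)^{-3/2} (I - S(u)^2), and it satisfies 0 < ‖φ(u)‖ ≤ 1 for all u in R^3. -/
open Matrix

noncomputable section

abbrev E3 := EuclideanSpace ℝ (Fin 3)

/-- The skew-symmetric (cross-product) matrix `S(x)`, satisfying `S(x) y = x × y`. -/
def sk (x : Fin 3 → ℝ) : Matrix (Fin 3) (Fin 3) ℝ :=
  !![0, -x 2, x 1; x 2, 0, -x 0; -x 1, x 0, 0]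

/-- The bounded function `h(u) = (1 + uᵀu)^{-1/2} u`. -/
def hfun (u : E3) : E3 := (Real.sqrt (1 + ‖u‖ ^ 2))⁻¹ • u

/-- The matrix `φ(u) = (1 + uᵀu)^{-3/2} (I - S(u)²)`. -/
def phiM (u : E3) : Matrix (Fin 3) (Fin 3) ℝ :=
  ((1 + ‖u‖ ^ 2) ^ (3 / 2 : ℝ))⁻¹ • ((1 : Matrix (Fin 3) (Fin 3) ℝ) - sk (fun i => u i) ^ 2)

lemma norm_sq_eq (u : E3) : ‖u‖^2 = u 0^2 + u 1^2 + u 2^2 := by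
  have : ‖u‖^2 = ∑ i, u i^2 := by
    rw [EuclideanSpace.norm_eq, Real.sq_sqrt (by positivity)]
    simp [sq_abs]
  rw [this, Fin.sum_univ_three]

lemma rpow32 (u : E3) :
    ((1 + ‖u‖ ^ 2) ^ (3 / 2 : ℝ)) = (Real.sqrt (1 + ‖u‖^2))^3 := by
  have hn : (0:ℝ) < 1 + ‖u‖^2 := by positivity
  rw [show (3/2:ℝ) = (1/2)*(3:ℕ) by norm_num, Real.rpow_mul hn.le,
    Real.rpow_natCast, ← Real.rpow_natCast (_ ^ (1/2:ℝ)), ← Real.rpow_mul hn.le]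
  rw [Real.sqrt_eq_rpow]
  norm_num
  rw [show ((3:ℝ)/2) = (1/2)*(3:ℕ) by norm_num, Real.rpow_mul hn.le, Real.rpow_natCast]

set_option maxHeartbeats 1000000 in
/-- `φ(u)` is the Jacobian of `h` at `u`, and its operator norm lies in `(0, 1]`. -/
theorem hfun_jacobian (u : E3) :
    HasFDerivAt hfun ((Matrix.toEuclideanCLM (𝕜 := ℝ) (phiM u) : E3 →L[ℝ] E3)) u ∧
    0 < ‖(Matrix.toEuclideanCLM (𝕜 := ℝ) (phiM u) : E3 →L[ℝ] E3)‖ ∧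
    ‖(Matrix.toEuclideanCLM (𝕜 := ℝ) (phiM u) : E3 →L[ℝ] E3)‖ ≤ 1 := by
  have hn : (0:ℝ) < 1 + ‖u‖^2 := by positivity
  set s : ℝ := Real.sqrt (1 + ‖u‖^2) with hs_def
  have hs0 : 0 < s := Real.sqrt_pos.2 hn
  have hs : s^2 = 1 + ‖u‖^2 := Real.sq_sqrt hn.le
  have hs1 : 1 ≤ s := by nlinarith [norm_nonneg u]
  have hc3 : ((1 + ‖u‖ ^ 2) ^ (3 / 2 : ℝ)) = s^3 := rpow32 u
  -- the derivative, described via inner products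
  set g' : ℝ := -(1/(2*s)*1)/(s)^2 with hg'
  set F' : E3 →L[ℝ] E3 :=
    s⁻¹ • ContinuousLinearMap.id ℝ E3 + (g' • (2 • innerSL ℝ u)).smulRight u with hF'
  have key : ∀ v : E3, F' v = (s^3)⁻¹ • ((1 + ‖u‖^2) • v - (inner ℝ u v : ℝ) • u) := by
    intro v
    have hstep : F' v = s⁻¹ • v + (g' * (2 * (inner ℝ u v : ℝ))) • u := by
      simp only [hF', ContinuousLinearMap.add_apply, ContinuousLinearMap.smul_apply,
        ContinuousLinearMap.id_apply, ContinuousLinearMap.smulRight_apply, innerSL_apply_apply,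
        smul_eq_mul]
      ring_nf
    have h1 : s⁻¹ = (s^3)⁻¹ * (1 + ‖u‖^2) := by
      rw [← hs]; field_simp
    have h2 : g' * (2 * (inner ℝ u v : ℝ)) = -((s^3)⁻¹ * (inner ℝ u v : ℝ)) := by
      rw [hg']; field_simp
    rw [hstep, smul_sub, smul_smul, smul_smul, ← h1, h2, neg_smul, sub_eq_add_neg]
  have hmat : (Matrix.toEuclideanCLM (𝕜 := ℝ) (phiM u) : E3 →L[ℝ] E3) = F' := by
    ext v i
    have lhs : (Matrix.toEuclideanCLM (𝕜 := ℝ) (phiM u) v) i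
        = (phiM u).mulVec (fun j => v j) i := rfl
    rw [lhs, key v]
    have hinner : (inner ℝ u v : ℝ) = u 0 * v 0 + u 1 * v 1 + u 2 * v 2 := by
      simp [PiLp.inner_apply, Fin.sum_univ_three]; ring
    have hrhs : ((s^3)⁻¹ • ((1 + ‖u‖^2) • v - (inner ℝ u v : ℝ) • u)) i
        = (s^3)⁻¹ * ((1 + ‖u‖^2) * v i - (inner ℝ u v : ℝ) * u i) := rfl
    rw [hrhs, hinner]
    simp only [phiM]
    rw [hc3]
    simp only [norm_sq_eq u, sq, Matrix.smul_mulVec, Matrix.sub_mulVec,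
      Matrix.one_mulVec, ← Matrix.mulVec_mulVec]
    fin_cases i <;>
      simp [sk, Matrix.mulVec, dotProduct, Fin.sum_univ_three] <;>
      (ring_nf; simp)
  rw [hmat]
  refine ⟨?_, ?_, ?_⟩
  · -- derivative
    have h1 : HasFDerivAt (fun x : E3 => ‖x‖^2) (2 • innerSL ℝ u) u :=
      (hasStrictFDerivAt_norm_sq u).hasFDerivAt
    have h2 : HasDerivAt (fun t : ℝ => Real.sqrt (1 + t)) (1/(2*s)*1) (‖u‖^2) := by
      have := (Real.hasDerivAt_sqrt (x := 1 + ‖u‖^2) (by positivity)).comp (‖u‖^2)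
        ((hasDerivAt_id (‖u‖^2)).const_add 1)
      simpa [Function.comp_def, ← hs_def] using this
    have h3 : HasDerivAt (fun t : ℝ => (Real.sqrt (1 + t))⁻¹) g' (‖u‖^2) :=
      h2.inv (by positivity)
    have h4 : HasFDerivAt (fun x : E3 => (Real.sqrt (1 + ‖x‖^2))⁻¹)
        (g' • (2 • innerSL ℝ u)) u := by
      have := h3.comp_hasFDerivAt u h1; exact this
    have h5 := h4.smul (hasFDerivAt_id u)
    have : HasFDerivAt hfun
        ((Real.sqrt (1 + ‖u‖^2))⁻¹ • ContinuousLinearMap.id ℝ E3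
          + (g' • (2 • innerSL ℝ u)).smulRight u) u := h5
    simpa [hF', hs_def] using this
  · -- positivity
    rw [norm_pos_iff]
    intro h0
    have this : ((s^3)⁻¹ • ((1 + ‖u‖^2) • (EuclideanSpace.single (0:Fin 3) (1:ℝ))
        - (inner ℝ u (EuclideanSpace.single (0:Fin 3) (1:ℝ)) : ℝ) • u)) 0 = 0 := by
      rw [← key (EuclideanSpace.single 0 1), h0]; simp
    have hin : (inner ℝ u (EuclideanSpace.single (0 : Fin 3) (1:ℝ)) : ℝ) = u 0 := by
      simp [PiLp.inner_apply, Fin.sum_univ_three, EuclideanSpace.single_apply]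
    have hcoord : ((s^3)⁻¹ • ((1 + ‖u‖^2) • (EuclideanSpace.single (0:Fin 3) (1:ℝ))
        - (inner ℝ u (EuclideanSpace.single (0:Fin 3) (1:ℝ)) : ℝ) • u)) 0
        = (s^3)⁻¹ * ((1 + ‖u‖^2) * 1 - (inner ℝ u (EuclideanSpace.single (0:Fin 3) (1:ℝ)) : ℝ) * u 0) := by
      simp [EuclideanSpace.single_apply]
    rw [hcoord, hin] at this
    have hpos : (0:ℝ) < (s^3)⁻¹ * ((1 + ‖u‖^2) * 1 - u 0 * u 0) := by
      have : u 0 * u 0 ≤ ‖u‖^2 := by nlinarith [norm_sq_eq u, sq_nonneg (u 1), sq_nonneg (u 2)]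
      have h2 : (0:ℝ) < (1 + ‖u‖^2) * 1 - u 0 * u 0 := by nlinarith
      positivity
    linarith [hpos]
  · -- norm ≤ 1
    refine ContinuousLinearMap.opNorm_le_bound _ zero_le_one fun v => ?_
    rw [key v, one_mul]
    have hnv : ‖(s^3)⁻¹ • ((1 + ‖u‖^2) • v - (inner ℝ u v : ℝ) • u)‖^2 ≤ ‖v‖^2 := by
      have hexp : ‖(s^3)⁻¹ • ((1 + ‖u‖^2) • v - (inner ℝ u v : ℝ) • u)‖^2
          = ((s^3)⁻¹)^2 * ((1 + ‖u‖^2)^2 * ‖v‖^2 - 2*(1 + ‖u‖^2)*(inner ℝ u v : ℝ)^2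
              + (inner ℝ u v : ℝ)^2 * ‖u‖^2) := by
        rw [norm_smul, mul_pow, norm_sub_sq_real, norm_smul, norm_smul,
          real_inner_smul_left, real_inner_smul_right, real_inner_comm v u]
        simp only [Real.norm_eq_abs, mul_pow, sq_abs]
        ring
      rw [hexp]
      set t : ℝ := (inner ℝ u v : ℝ) with ht
      have htu : t^2 ≤ ‖u‖^2 * ‖v‖^2 := by
        have := abs_real_inner_le_norm u v
        nlinarith [this, abs_nonneg t, norm_nonneg u, norm_nonneg v, sq_abs t]
      have hsi : ((s^3)⁻¹)^2 = ((1 + ‖u‖^2)^3)⁻¹ := by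
        rw [← hs]; ring
      rw [hsi]
      rw [inv_mul_le_iff₀ (by positivity)]
      nlinarith [mul_nonneg (sq_nonneg t) (by positivity : (0:ℝ) ≤ 2 + ‖u‖^2),
        mul_nonneg (mul_nonneg (sq_nonneg ‖u‖) (sq_nonneg (1 + ‖u‖^2))) (sq_nonneg ‖v‖),
        sq_nonneg ‖u‖, sq_nonneg ‖v‖]
    have := Real.sqrt_le_sqrt hnv
    rwa [Real.sqrt_sq (norm_nonneg _), Real.sqrt_sq (norm_nonneg _)] at this

end
end

section
/- For any unit quaternion (η̃, q̃), the operator norm of the matrix η̃ I − S(q̃) equals 1. -/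
open Matrix

noncomputable section

/-- The Euclidean norm of a vector in ℝ³. -/
def vnorm (x : Fin 3 → ℝ) : ℝ := Real.sqrt (x ⬝ᵥ x)

/-- The operator (spectral) norm of a 3×3 real matrix. -/
def opNorm (M : Matrix (Fin 3) (Fin 3) ℝ) : ℝ :=
  ‖(Matrix.toEuclideanCLM (𝕜 := ℝ) M : EuclideanSpace ℝ (Fin 3) →L[ℝ] EuclideanSpace ℝ (Fin 3))‖

lemma mulvec_dot (ηt : ℝ) (qt x : Fin 3 → ℝ) :
    ((ηt • (1 : Matrix (Fin 3) (Fin 3) ℝ) - sk qt) *ᵥ x) ⬝ᵥ ((ηt • (1 : Matrix (Fin 3) (Fin 3) ℝ) - sk qt) *ᵥ x)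
      = (ηt ^ 2 + qt ⬝ᵥ qt) * (x ⬝ᵥ x) - (qt ⬝ᵥ x) ^ 2 := by
  simp [sk, Matrix.mulVec, dotProduct, Fin.sum_univ_three, Matrix.one_apply,
    Matrix.smul_apply, Matrix.sub_apply]
  ring

theorem opNorm_eta_smul_id_sub_skew (ηt : ℝ) (qt : Fin 3 → ℝ)
    (hQ : ηt ^ 2 + vnorm qt ^ 2 = 1) :
    opNorm (ηt • (1 : Matrix (Fin 3) (Fin 3) ℝ) - sk qt) = 1 := by
  have hqq : (0:ℝ) ≤ qt ⬝ᵥ qt := by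
    simp only [dotProduct, Fin.sum_univ_three, ← sq]; positivity
  have hQ' : ηt ^ 2 + qt ⬝ᵥ qt = 1 := by
    rwa [vnorm, Real.sq_sqrt hqq] at hQ
  set M := ηt • (1 : Matrix (Fin 3) (Fin 3) ℝ) - sk qt with hM
  set f := (Matrix.toEuclideanCLM (𝕜 := ℝ) M : EuclideanSpace ℝ (Fin 3) →L[ℝ] EuclideanSpace ℝ (Fin 3)) with hf
  -- norm-squared identity
  have key : ∀ x : Fin 3 → ℝ,
      ‖f ((WithLp.equiv 2 _).symm x)‖ ^ 2 = x ⬝ᵥ x - (qt ⬝ᵥ x) ^ 2 := by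
    intro x
    rw [hf, WithLp.equiv_symm_apply, Matrix.toEuclideanCLM_toLp]
    rw [EuclideanSpace.norm_eq]
    rw [Real.sq_sqrt (by positivity)]
    have := mulvec_dot ηt qt x
    rw [hQ'] at this
    simp only [dotProduct] at this ⊢
    simpa [sq_abs, sq] using this.trans (by ring)
  have hub : ‖f‖ ≤ 1 := by
    apply f.opNorm_le_bound zero_le_one
    intro x
    have hx := key (WithLp.equiv 2 _ x)
    rw [(WithLp.equiv 2 _).symm_apply_apply] at hx
    have hxn : ‖x‖ ^ 2 = (WithLp.equiv 2 _ x) ⬝ᵥ (WithLp.equiv 2 _ x) := by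
      rw [EuclideanSpace.norm_eq, Real.sq_sqrt (by positivity)]
      simp [dotProduct, sq_abs, sq]
    have h2 : ‖f x‖ ^ 2 ≤ ‖x‖ ^ 2 := by
      rw [hx, hxn]; nlinarith [sq_nonneg (qt ⬝ᵥ (WithLp.equiv 2 _ x))]
    nlinarith [norm_nonneg (f x), norm_nonneg x]
  have hlb : 1 ≤ ‖f‖ := by
    -- pick x ≠ 0 with qt ⬝ᵥ x = 0
    obtain ⟨x, hx0, hxq⟩ : ∃ x : Fin 3 → ℝ, x ⬝ᵥ x ≠ 0 ∧ qt ⬝ᵥ x = 0 := by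
      by_cases h : qt 0 = 0 ∧ qt 1 = 0
      · exact ⟨![1,0,0], by norm_num [dotProduct, Fin.sum_univ_three, Matrix.cons_val_two, Matrix.tail_cons, Matrix.head_cons],
          by simp [dotProduct, Fin.sum_univ_three, h.1]⟩
      · refine ⟨![-(qt 1), qt 0, 0], ?_, by simp [dotProduct, Fin.sum_univ_three]; ring⟩
        simp only [dotProduct, Fin.sum_univ_three]
        intro heq
        simp only [Matrix.cons_val_zero, Matrix.cons_val_one, Matrix.head_cons] at heq
        norm_num at heq
        rcases not_and_or.mp h with h' | h' <;>
          nlinarith [mul_self_nonneg (qt 0), mul_self_nonneg (qt 1), mul_self_pos.mpr h']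
    set y : EuclideanSpace ℝ (Fin 3) := (WithLp.equiv 2 _).symm x with hy
    have hky := key x
    rw [hxq] at hky
    have hyn : ‖y‖ ^ 2 = x ⬝ᵥ x := by
      rw [hy, EuclideanSpace.norm_eq, Real.sq_sqrt (by positivity)]
      simp [dotProduct, sq_abs, sq]
    have hfy : ‖f y‖ = ‖y‖ := by
      have : ‖f y‖ ^ 2 = ‖y‖ ^ 2 := by rw [hky, hyn]; ring
      nlinarith [norm_nonneg (f y), norm_nonneg y]
    have hyne : ‖y‖ ≠ 0 := by
      intro h
      apply hx0
      rw [← hyn, h]; ring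
    have := f.le_opNorm y
    rw [hfy] at this
    have hpos : 0 < ‖y‖ := lt_of_le_of_ne (norm_nonneg _) (Ne.symm hyne)
    calc (1:ℝ) = ‖y‖ / ‖y‖ := by field_simp
    _ ≤ ‖f‖ := by rw [div_le_iff₀ hpos]; exact this
  rw [opNorm]
  exact le_antisymm hub hlb


end
end

section
/- Let r1, r2 ∈ R^3 be nonzero and not collinear, and γ1, γ2 > 0. Then the matrix W = −γ1 S(r1)² − γ2 S(r2)² is symmetric positive definite. -/
open Matrix

noncomputable section

private lemma sum3_sq_nonpos {a b c : ℝ} (h : a ^ 2 + b ^ 2 + c ^ 2 ≤ 0) :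
    a = 0 ∧ b = 0 ∧ c = 0 := by
  have ha : a ^ 2 = 0 :=
    le_antisymm (by linarith [sq_nonneg b, sq_nonneg c]) (sq_nonneg a)
  have hb : b ^ 2 = 0 :=
    le_antisymm (by linarith [sq_nonneg a, sq_nonneg c]) (sq_nonneg b)
  have hc : c ^ 2 = 0 :=
    le_antisymm (by linarith [sq_nonneg a, sq_nonneg b]) (sq_nonneg c)
  exact ⟨pow_eq_zero_iff two_ne_zero |>.mp ha,
    pow_eq_zero_iff two_ne_zero |>.mp hb,
    pow_eq_zero_iff two_ne_zero |>.mp hc⟩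

set_option maxHeartbeats 1000000 in
theorem W_posDef (r₁ r₂ : Fin 3 → ℝ) (γ₁ γ₂ : ℝ) (hγ₁ : 0 < γ₁) (hγ₂ : 0 < γ₂)
    (hr₁ : r₁ ≠ 0) (hr₂ : r₂ ≠ 0) (hcol : crossProduct r₁ r₂ ≠ 0) :
    (-(γ₁ • sk r₁ ^ 2) - γ₂ • sk r₂ ^ 2).PosDef := by
  rw [Matrix.posDef_iff_dotProduct_mulVec]
  constructor
  · rw [Matrix.IsHermitian]
    ext i j
    fin_cases i <;> fin_cases j <;>
      simp [sk, pow_two, Matrix.mul_apply, Fin.sum_univ_three, Matrix.conjTranspose_apply] <;>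
      ring
  · intro x hx
    simp only [Matrix.sub_mulVec, Matrix.neg_mulVec, Matrix.smul_mulVec, dotProduct,
      Matrix.mulVec, Fin.sum_univ_three, sk, pow_two, Matrix.mul_apply, star_trivial]
    simp [Fin.isValue, Matrix.cons_val_zero, Matrix.cons_val_one, Matrix.head_cons,
      Matrix.cons_val_two, Matrix.tail_cons]
    have key : x 0 *
          ((-(γ₁ * (-(r₁ 2 * r₁ 2) + -(r₁ 1 * r₁ 1))) - γ₂ * (-(r₂ 2 * r₂ 2) + -(r₂ 1 * r₂ 1))) * x 0 +
              (-(γ₁ * (r₁ 1 * r₁ 0)) - γ₂ * (r₂ 1 * r₂ 0)) * x 1 +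
            (-(γ₁ * (r₁ 2 * r₁ 0)) - γ₂ * (r₂ 2 * r₂ 0)) * x 2) +
        x 1 *
          ((-(γ₁ * (r₁ 0 * r₁ 1)) - γ₂ * (r₂ 0 * r₂ 1)) * x 0 +
              (-(γ₁ * (-(r₁ 2 * r₁ 2) + -(r₁ 0 * r₁ 0))) - γ₂ * (-(r₂ 2 * r₂ 2) + -(r₂ 0 * r₂ 0))) * x 1 +
            (-(γ₁ * (r₁ 2 * r₁ 1)) - γ₂ * (r₂ 2 * r₂ 1)) * x 2) +
      x 2 *
        ((-(γ₁ * (r₁ 0 * r₁ 2)) - γ₂ * (r₂ 0 * r₂ 2)) * x 0 + (-(γ₁ * (r₁ 1 * r₁ 2)) - γ₂ * (r₂ 1 * r₂ 2)) * x 1 +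
          (-(γ₁ * (-(r₁ 1 * r₁ 1) + -(r₁ 0 * r₁ 0))) - γ₂ * (-(r₂ 1 * r₂ 1) + -(r₂ 0 * r₂ 0))) * x 2)
        = γ₁ * ((r₁ 1 * x 2 - r₁ 2 * x 1) ^ 2 + (r₁ 2 * x 0 - r₁ 0 * x 2) ^ 2
                  + (r₁ 0 * x 1 - r₁ 1 * x 0) ^ 2)
          + γ₂ * ((r₂ 1 * x 2 - r₂ 2 * x 1) ^ 2 + (r₂ 2 * x 0 - r₂ 0 * x 2) ^ 2
                  + (r₂ 0 * x 1 - r₂ 1 * x 0) ^ 2) := by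
      ring
    rw [key]
    by_contra hle
    push_neg at hle
    have pA : (0:ℝ) ≤ (r₁ 1 * x 2 - r₁ 2 * x 1) ^ 2 + (r₁ 2 * x 0 - r₁ 0 * x 2) ^ 2
        + (r₁ 0 * x 1 - r₁ 1 * x 0) ^ 2 := by positivity
    have pB : (0:ℝ) ≤ (r₂ 1 * x 2 - r₂ 2 * x 1) ^ 2 + (r₂ 2 * x 0 - r₂ 0 * x 2) ^ 2
        + (r₂ 0 * x 1 - r₂ 1 * x 0) ^ 2 := by positivity
    have hSA : (r₁ 1 * x 2 - r₁ 2 * x 1) ^ 2 + (r₁ 2 * x 0 - r₁ 0 * x 2) ^ 2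
        + (r₁ 0 * x 1 - r₁ 1 * x 0) ^ 2 ≤ 0 := by
      nlinarith [mul_nonneg hγ₂.le pB]
    have hSB : (r₂ 1 * x 2 - r₂ 2 * x 1) ^ 2 + (r₂ 2 * x 0 - r₂ 0 * x 2) ^ 2
        + (r₂ 0 * x 1 - r₂ 1 * x 0) ^ 2 ≤ 0 := by
      nlinarith [mul_nonneg hγ₁.le pA]
    obtain ⟨ha0, ha1, ha2⟩ := sum3_sq_nonpos hSA
    obtain ⟨hb0, hb1, hb2⟩ := sum3_sq_nonpos hSB
    have hn : 0 < x 0 ^ 2 + x 1 ^ 2 + x 2 ^ 2 := by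
      obtain ⟨j, hj⟩ : ∃ j, x j ≠ 0 := by
        by_contra h
        push_neg at h
        exact hx (funext h)
      fin_cases j <;> positivity
    have hA0 : r₁ 0 * (x 0 ^ 2 + x 1 ^ 2 + x 2 ^ 2)
        = (r₁ 0 * x 0 + r₁ 1 * x 1 + r₁ 2 * x 2) * x 0 := by
      linear_combination x 1 * ha2 - x 2 * ha1
    have hA1 : r₁ 1 * (x 0 ^ 2 + x 1 ^ 2 + x 2 ^ 2)
        = (r₁ 0 * x 0 + r₁ 1 * x 1 + r₁ 2 * x 2) * x 1 := by
      linear_combination x 2 * ha0 - x 0 * ha2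
    have hA2 : r₁ 2 * (x 0 ^ 2 + x 1 ^ 2 + x 2 ^ 2)
        = (r₁ 0 * x 0 + r₁ 1 * x 1 + r₁ 2 * x 2) * x 2 := by
      linear_combination x 0 * ha1 - x 1 * ha0
    have hB0 : r₂ 0 * (x 0 ^ 2 + x 1 ^ 2 + x 2 ^ 2)
        = (r₂ 0 * x 0 + r₂ 1 * x 1 + r₂ 2 * x 2) * x 0 := by
      linear_combination x 1 * hb2 - x 2 * hb1
    have hB1 : r₂ 1 * (x 0 ^ 2 + x 1 ^ 2 + x 2 ^ 2)
        = (r₂ 0 * x 0 + r₂ 1 * x 1 + r₂ 2 * x 2) * x 1 := by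
      linear_combination x 2 * hb0 - x 0 * hb2
    have hB2 : r₂ 2 * (x 0 ^ 2 + x 1 ^ 2 + x 2 ^ 2)
        = (r₂ 0 * x 0 + r₂ 1 * x 1 + r₂ 2 * x 2) * x 2 := by
      linear_combination x 0 * hb1 - x 1 * hb0
    have hd0 : (r₁ 1 * r₂ 2 - r₁ 2 * r₂ 1) * (x 0 ^ 2 + x 1 ^ 2 + x 2 ^ 2) ^ 2 = 0 := by
      linear_combination (r₂ 2 * (x 0 ^ 2 + x 1 ^ 2 + x 2 ^ 2)) * hA1
        + ((r₁ 0 * x 0 + r₁ 1 * x 1 + r₁ 2 * x 2) * x 1) * hB2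
        - (r₂ 1 * (x 0 ^ 2 + x 1 ^ 2 + x 2 ^ 2)) * hA2
        - ((r₁ 0 * x 0 + r₁ 1 * x 1 + r₁ 2 * x 2) * x 2) * hB1
    have hd1 : (r₁ 2 * r₂ 0 - r₁ 0 * r₂ 2) * (x 0 ^ 2 + x 1 ^ 2 + x 2 ^ 2) ^ 2 = 0 := by
      linear_combination (r₂ 0 * (x 0 ^ 2 + x 1 ^ 2 + x 2 ^ 2)) * hA2
        + ((r₁ 0 * x 0 + r₁ 1 * x 1 + r₁ 2 * x 2) * x 2) * hB0
        - (r₂ 2 * (x 0 ^ 2 + x 1 ^ 2 + x 2 ^ 2)) * hA0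
        - ((r₁ 0 * x 0 + r₁ 1 * x 1 + r₁ 2 * x 2) * x 0) * hB2
    have hd2 : (r₁ 0 * r₂ 1 - r₁ 1 * r₂ 0) * (x 0 ^ 2 + x 1 ^ 2 + x 2 ^ 2) ^ 2 = 0 := by
      linear_combination (r₂ 1 * (x 0 ^ 2 + x 1 ^ 2 + x 2 ^ 2)) * hA0
        + ((r₁ 0 * x 0 + r₁ 1 * x 1 + r₁ 2 * x 2) * x 0) * hB1
        - (r₂ 0 * (x 0 ^ 2 + x 1 ^ 2 + x 2 ^ 2)) * hA1
        - ((r₁ 0 * x 0 + r₁ 1 * x 1 + r₁ 2 * x 2) * x 1) * hB0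
    have hn2 : (x 0 ^ 2 + x 1 ^ 2 + x 2 ^ 2) ^ 2 ≠ 0 := pow_ne_zero _ (ne_of_gt hn)
    apply hcol
    funext i
    fin_cases i <;>
      simp only [cross_apply, Matrix.cons_val_zero, Matrix.cons_val_one, Matrix.head_cons,
        Matrix.cons_val_two, Matrix.tail_cons, Pi.zero_apply, Fin.isValue] <;>
      [exact (mul_eq_zero.mp hd0).resolve_right hn2;
       exact (mul_eq_zero.mp hd1).resolve_right hn2;
       exact (mul_eq_zero.mp hd2).resolve_right hn2]

end
end
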